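/- Let α ≥ 1 and let x₁ satisfy 0 < x₁ ≤ α/(2α+1). Set d = x₁/(α(1+α)) and x₄ = (1+α)x₁/α. Then for all x with x₄ ≤ x ≤ 1, (x − d) / max{1 − x, x − x₁/α} ≤ (2+α)/(1+α), provided max{1 − x, x − x₁/α} > 0. -/

import Mathlib

theorem stmt8 (α x₁ d x₄ : ℝ) (hα : 1 ≤ α) (h1 : 0 < x₁) (hx1 : x₁ ≤ α / (2 * α + 1))
    (hd : d = x₁ / (α * (1 + α))) (hx4 : x₄ = (1 + α) * x₁ / α) :
    ∀ x : ℝ, x₄ ≤ x → x ≤ 1 → 0 < max (1 - x) (x - x₁ / α) →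
      (x - d) / max (1 - x) (x - x₁ / α) ≤ (2 + α) / (1 + α) := by
  intro x hxl hxu hm
  have hα0 : (0:ℝ) < α := by linarith
  have h1α : (0:ℝ) < 1 + α := by linarith
  have hkey : x₁ * (2 * α + 1) ≤ α := (le_div_iff₀ (by positivity)).mp hx1
  have hx4' : (1 + α) * x₁ ≤ α * x := by
    have h := hxl; rw [hx4, div_le_iff₀ hα0] at h; linarith
  have e : α * (x - x₁ / α) = α * x - x₁ := by field_simp
  rw [div_le_div_iff₀ hm h1α]
  rcases le_total (1 - x) (x - x₁ / α) with h | h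
  · rw [max_eq_right h, hd]
    have hh : α * (1 - x) ≤ α * x - x₁ := by
      nlinarith [mul_le_mul_of_nonneg_left h (le_of_lt hα0)]
    have key : α * ((x - x₁ / (α * (1 + α))) * (1 + α)) ≤ α * ((2 + α) * (x - x₁ / α)) := by
      have e1 : α * ((x - x₁ / (α * (1 + α))) * (1 + α)) = α * x * (1 + α) - x₁ := by
        field_simp
      have e2 : α * ((2 + α) * (x - x₁ / α)) = (2 + α) * (α * x) - (2 + α) * x₁ := by
        field_simp
      rw [e1, e2]; nlinarith
    exact le_of_mul_le_mul_left key hα0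
  · rw [max_eq_left h, hd]
    have hh : α * x - x₁ ≤ α * (1 - x) := by
      nlinarith [mul_le_mul_of_nonneg_left h (le_of_lt hα0)]
    have key : α * ((x - x₁ / (α * (1 + α))) * (1 + α)) ≤ α * ((2 + α) * (1 - x)) := by
      have e1 : α * ((x - x₁ / (α * (1 + α))) * (1 + α)) = α * x * (1 + α) - x₁ := by
        field_simp
      rw [e1]
      nlinarith [mul_le_mul_of_nonneg_left hh (by positivity : (0:ℝ) ≤ 3 + 2*α), hkey]
    exact le_of_mul_le_mul_left key hα0
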